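/- Let A be a 2×2 real payoff matrix admitting a unique Nash equilibrium (x₁*, x₂*) ∈ Δ₂ × Δ₂, and assume this equilibrium is interior (all coordinates of x₁* and x₂* are strictly positive). Then there exists a constant C (depending only on the entries of A, not on T) such that for every time horizon T, for every initialization x₁⁰ ∈ Δ₂, x₂⁰ ∈ Δ₂, and for every run of Optimistic Fictitious Play on A (under any tiebreaking rule in the argmax steps), the total regret satisfies reg(T) ≤ C. -/

import Mathlib

open Matrix

/-- A coordinate vector `x` is a vertex (standard basis vector) maximizing `⟨·, v⟩`
over all standard basis vectors. -/
def IsVertexArgmax {m : ℕ} (x v : Fin m → ℝ) : Prop :=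
  ∃ i : Fin m, x = Pi.single i 1 ∧
    ∀ j : Fin m, (Pi.single j 1 : Fin m → ℝ) ⬝ᵥ v ≤ x ⬝ᵥ v

/-- Optimistic Fictitious Play: `y₁⁰ = 0`, `y₂⁰ = 0`, arbitrary initialization
`x₁⁰ ∈ Δ_m`, `x₂⁰ ∈ Δ_n`; for `t ≥ 1`, `y₁ᵗ = y₁ᵗ⁻¹ + A x₂ᵗ⁻¹`,
`y₂ᵗ = y₂ᵗ⁻¹ − Aᵀ x₁ᵗ⁻¹`, and `x₁ᵗ` (resp. `x₂ᵗ`) is a standard basis vector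
maximizing `⟨e, y₁ᵗ + A x₂ᵗ⁻¹⟩` (resp. `⟨e, y₂ᵗ − Aᵀ x₁ᵗ⁻¹⟩`), ties broken arbitrarily. -/
def IsOFPRun {m n : ℕ} (A : Matrix (Fin m) (Fin n) ℝ)
    (x₁ : ℕ → Fin m → ℝ) (x₂ : ℕ → Fin n → ℝ)
    (y₁ : ℕ → Fin m → ℝ) (y₂ : ℕ → Fin n → ℝ) : Prop :=
  y₁ 0 = 0 ∧ y₂ 0 = 0 ∧
  x₁ 0 ∈ stdSimplex ℝ (Fin m) ∧ x₂ 0 ∈ stdSimplex ℝ (Fin n) ∧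
  (∀ t : ℕ, y₁ (t + 1) = y₁ t + A.mulVec (x₂ t)) ∧
  (∀ t : ℕ, y₂ (t + 1) = y₂ t - Aᵀ.mulVec (x₁ t)) ∧
  (∀ t : ℕ, IsVertexArgmax (x₁ (t + 1)) (y₁ (t + 1) + A.mulVec (x₂ t))) ∧
  (∀ t : ℕ, IsVertexArgmax (x₂ (t + 1)) (y₂ (t + 1) - Aᵀ.mulVec (x₁ t)))

/-- Total regret `reg(T)`. -/
noncomputable def totalRegret {m n : ℕ} (A : Matrix (Fin m) (Fin n) ℝ)
    (x₁ : ℕ → Fin m → ℝ) (x₂ : ℕ → Fin n → ℝ) (T : ℕ) : ℝ :=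
  (⨆ x : stdSimplex ℝ (Fin m),
      (x : Fin m → ℝ) ⬝ᵥ (∑ t ∈ Finset.range (T + 1), A.mulVec (x₂ t)))
  - (⨅ x : stdSimplex ℝ (Fin n),
      (x : Fin n → ℝ) ⬝ᵥ (∑ t ∈ Finset.range (T + 1), Aᵀ.mulVec (x₁ t)))

/-- Nash equilibrium of the zero-sum game with payoff matrix `A`. -/
def IsNashEq {m n : ℕ} (A : Matrix (Fin m) (Fin n) ℝ)
    (x₁ : Fin m → ℝ) (x₂ : Fin n → ℝ) : Prop :=
  x₁ ∈ stdSimplex ℝ (Fin m) ∧ x₂ ∈ stdSimplex ℝ (Fin n) ∧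
  (∀ x ∈ stdSimplex ℝ (Fin m), x ⬝ᵥ A.mulVec x₂ ≤ x₁ ⬝ᵥ A.mulVec x₂) ∧
  (∀ y ∈ stdSimplex ℝ (Fin n), x₁ ⬝ᵥ A.mulVec x₂ ≤ x₁ ⬝ᵥ A.mulVec y)

/-- For a 2×2 zero-sum game with a unique, interior Nash equilibrium,
Optimistic Fictitious Play (any initialization, any tiebreaking) has regret
bounded by a constant `C` depending only on `A`. -/
-- ===== auxiliary development =====

noncomputable def Hfun (a b c d x y : ℝ) : ℝ :=
  c * max x 0 - d * max (-x) 0 + a * max y 0 - b * max (-y) 0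

-- generic one-coordinate step bounds for f x = c * max x 0 - d * max (-x) 0
lemma step_le (c d u x : ℝ) (hc : 0 < c) (hd : d < 0) :
    c * max (x+u) 0 - d * max (-(x+u)) 0 - (c * max x 0 - d * max (-x) 0)
      ≤ max (c*u) (d*u) := by
  rcases max_cases (x+u) 0 with ⟨e1,l1⟩|⟨e1,l1⟩ <;>
  rcases max_cases (-(x+u)) 0 with ⟨e2,l2⟩|⟨e2,l2⟩ <;>
  rcases max_cases x 0 with ⟨e3,l3⟩|⟨e3,l3⟩ <;>
  rcases max_cases (-x) 0 with ⟨e4,l4⟩|⟨e4,l4⟩ <;>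
  rw [e1,e2,e3,e4] <;>
  [skip; skip; skip; skip; skip; skip; skip; skip; skip; skip; skip; skip; skip; skip; skip; skip] <;>
  (first
    | (apply le_max_of_le_left; nlinarith)
    | (apply le_max_of_le_right; nlinarith))

lemma step_neg (c d u x : ℝ) (hc : 0 < c) (hd : d < 0) (hu : x + u ≤ 0) :
    c * max (x+u) 0 - d * max (-(x+u)) 0 - (c * max x 0 - d * max (-x) 0)
      ≤ d*u := by
  rcases max_cases x 0 with ⟨e3,l3⟩|⟨e3,l3⟩ <;>
  rcases max_cases (-x) 0 with ⟨e4,l4⟩|⟨e4,l4⟩ <;>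
  rw [max_eq_right hu, max_eq_left (by linarith : (0:ℝ) ≤ -(x+u)), e3, e4] <;>
  nlinarith

lemma step_pos (c d u x : ℝ) (hc : 0 < c) (hd : d < 0) (h0 : 0 ≤ x) (hu : 0 ≤ x + u) :
    c * max (x+u) 0 - d * max (-(x+u)) 0 - (c * max x 0 - d * max (-x) 0)
      ≤ c*u := by
  rw [max_eq_left hu, max_eq_left h0, max_eq_right (by linarith : -(x+u) ≤ 0),
    max_eq_right (by linarith : -x ≤ 0)]
  ring_nf
  nlinarith

lemma Hbound (a b c d x y R : ℝ) (ha : 0 < a) (hb : b < 0) (hc : 0 < c) (hd : d < 0)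
    (hx : |x| ≤ R) (hy : |y| ≤ R) :
    Hfun a b c d x y ≤ (a - b + c - d) * R := by
  rw [abs_le] at hx hy
  unfold Hfun
  rcases max_cases x 0 with ⟨e1,l1⟩|⟨e1,l1⟩ <;>
  rcases max_cases (-x) 0 with ⟨e2,l2⟩|⟨e2,l2⟩ <;>
  rcases max_cases y 0 with ⟨e3,l3⟩|⟨e3,l3⟩ <;>
  rcases max_cases (-y) 0 with ⟨e4,l4⟩|⟨e4,l4⟩ <;>
  rw [e1,e2,e3,e4] <;> nlinarith

theorem stepH (a b c d : ℝ) (ha : 0 < a) (hb : b < 0) (hc : 0 < c) (hd : d < 0)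
    (x y s t : ℝ)
    (hst : s = a ∨ s = b) (htt : t = c ∨ t = d)
    (hi : s = a → 2*d - c ≤ y) (hii : s = b → y ≤ 2*c - d)
    (hiii : t = c → b - 2*a ≤ x) (hiv : t = d → x ≤ a - 2*b)
    (hF1 : s = a → y < c → x ≤ 2*a - 2*b)
    (hF2 : t = d → -a < x → y ≤ 2*c - 2*d)
    (hF3 : t = c → x < -b → 2*d - 2*c ≤ y)
    (hF4 : s = b → d < y → 2*b - 2*a ≤ x)
    (hH : Hfun a b c d x y ≤ 8*(a-b+c-d)^2) :
    Hfun a b c d (x + s) (y - t) ≤ 8*(a-b+c-d)^2 := by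
  have hM : 0 < a - b + c - d := by linarith
  -- decompose Hfun difference
  have hsplit : ∀ u w : ℝ, Hfun a b c d (x+u) (y-w) - Hfun a b c d x y
      = (c * max (x+u) 0 - d * max (-(x+u)) 0 - (c * max x 0 - d * max (-x) 0))
      + (a * max (y + -w) 0 - b * max (-(y + -w)) 0 - (a * max y 0 - b * max (-y) 0)) := by
    intro u w
    unfold Hfun
    rw [show y - w = y + -w by ring]
    ring
  have box : ∀ u w : ℝ, |x + u| ≤ 8*(a-b+c-d) → |y - w| ≤ 8*(a-b+c-d) →
      Hfun a b c d (x+u) (y-w) ≤ 8*(a-b+c-d)^2 := by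
    intro u w h1 h2
    calc Hfun a b c d (x+u) (y-w) ≤ (a-b+c-d) * (8*(a-b+c-d)) :=
          Hbound a b c d _ _ _ ha hb hc hd h1 h2
      _ = 8*(a-b+c-d)^2 := by ring
  rcases hst with hs | hs <;> rcases htt with htc | htd
  · -- s = a, t = c
    rcases le_or_gt c y with hy | hy
    · have h1 := step_le c d a x hc hd
      have h2 := step_pos a b (-c) y ha hb (by linarith) (by linarith)
      rw [max_eq_left (by nlinarith : d*a ≤ c*a)] at h1
      have := hsplit a c
      rw [hs, htc]
      nlinarith [hsplit a c]
    · apply box a c (abs_le.mpr ⟨by linarith [hiii htc], by linarith [hF1 hs hy]⟩)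
        (abs_le.mpr ⟨by linarith [hi hs], by linarith⟩) |>.trans_eq' (by rw [hs, htc])
  · -- s = a, t = d
    rcases le_or_gt x (-a) with hx | hx
    · have h1 := step_neg c d a x hc hd (by linarith)
      have h2 := step_le a b (-d) y ha hb
      rw [max_eq_left (by nlinarith : b*(-d) ≤ a*(-d))] at h2
      rw [hs, htd]
      nlinarith [hsplit a d]
    · apply box a d (abs_le.mpr ⟨by linarith, by linarith [hiv htd]⟩)
        (abs_le.mpr ⟨by linarith [hi hs], by linarith [hF2 htd hx]⟩) |>.trans_eq' (by rw [hs, htd])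
  · -- s = b, t = c
    rcases le_or_gt (-b) x with hx | hx
    · have h1 := step_pos c d b x hc hd (by linarith) (by linarith)
      have h2 := step_le a b (-c) y ha hb
      rw [max_eq_right (by nlinarith : a*(-c) ≤ b*(-c))] at h2
      rw [hs, htc]
      nlinarith [hsplit b c]
    · apply box b c (abs_le.mpr ⟨by linarith [hiii htc], by linarith⟩)
        (abs_le.mpr ⟨by linarith [hF3 htc hx], by linarith [hii hs]⟩) |>.trans_eq' (by rw [hs, htc])
  · -- s = b, t = d
    rcases le_or_gt y d with hy | hy
    · have h1 := step_le c d b x hc hd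
      rw [max_eq_right (by nlinarith : c*b ≤ d*b)] at h1
      have h2 := step_neg a b (-d) y ha hb (by linarith)
      rw [hs, htd]
      nlinarith [hsplit b d]
    · apply box b d (abs_le.mpr ⟨by linarith [hF4 hs hy], by linarith [hiv htd]⟩)
        (abs_le.mpr ⟨by linarith, by linarith [hii hs]⟩) |>.trans_eq' (by rw [hs, htd])

theorem core (a b c d : ℝ) (ha : 0 < a) (hb : b < 0) (hc : 0 < c) (hd : d < 0)
    (d1 d2 s t : ℕ → ℝ)
    (h10 : d1 0 = 0) (h20 : d2 0 = 0)
    (hs0 : b ≤ s 0 ∧ s 0 ≤ a) (ht0 : d ≤ t 0 ∧ t 0 ≤ c)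
    (hr1 : ∀ n, d1 (n+1) = d1 n + s n)
    (hr2 : ∀ n, d2 (n+1) = d2 n - t n)
    (hs : ∀ n, (s (n+1) = a ∨ s (n+1) = b) ∧
      (0 < d2 n - 2*(t n) → s (n+1) = a) ∧ (d2 n - 2*(t n) < 0 → s (n+1) = b))
    (ht : ∀ n, (t (n+1) = c ∨ t (n+1) = d) ∧
      (0 < d1 n + 2*(s n) → t (n+1) = c) ∧ (d1 n + 2*(s n) < 0 → t (n+1) = d)) :
    ∀ n, Hfun a b c d (d1 n) (d2 n) ≤ 8*(a-b+c-d)^2 := by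
  have hab : a ≠ b := by linarith
  have hcd : c ≠ d := by linarith
  have hM : 0 < a - b + c - d := by linarith
  -- range facts for s, t at all times
  have hsb : ∀ n, b ≤ s n ∧ s n ≤ a := by
    intro n
    cases n with
    | zero => exact hs0
    | succ m => rcases (hs m).1 with h | h <;> rw [h] <;> constructor <;> linarith
  have htb : ∀ n, d ≤ t n ∧ t n ≤ c := by
    intro n
    cases n with
    | zero => exact ht0
    | succ m => rcases (ht m).1 with h | h <;> rw [h] <;> constructor <;> linarith
  -- (i'): s (n+1) = a → 2d - c ≤ d2 (n+1)
  have I1 : ∀ n, s (n+1) = a → 2*d - c ≤ d2 (n+1) := by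
    intro n hsa
    have h2 : ¬ (d2 n - 2*(t n) < 0) := fun h => hab (hsa.symm.trans ((hs n).2.2 h))
    have h2' : 2*(t n) ≤ d2 n := by by_contra h; exact h2 (by linarith)
    have := (htb n).1
    rw [hr2 n]; linarith [(htb n).2]
  have I2 : ∀ n, s (n+1) = b → d2 (n+1) ≤ 2*c - d := by
    intro n hsa
    have h2 : ¬ (0 < d2 n - 2*(t n)) := fun h => hab (((hs n).2.1 h).symm.trans hsa)
    have h2' : d2 n ≤ 2*(t n) := by by_contra h; exact h2 (by linarith)
    rw [hr2 n]; linarith [(htb n).1, (htb n).2]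
  have I3 : ∀ n, t (n+1) = c → b - 2*a ≤ d1 (n+1) := by
    intro n hta
    have h2 : ¬ (d1 n + 2*(s n) < 0) := fun h => hcd (hta.symm.trans ((ht n).2.2 h))
    have h2' : -(2*(s n)) ≤ d1 n := by by_contra h; exact h2 (by linarith)
    rw [hr1 n]; linarith [(hsb n).1, (hsb n).2]
  have I4 : ∀ n, t (n+1) = d → d1 (n+1) ≤ a - 2*b := by
    intro n hta
    have h2 : ¬ (0 < d1 n + 2*(s n)) := fun h => hcd (((ht n).2.1 h).symm.trans hta)
    have h2' : d1 n ≤ -(2*(s n)) := by by_contra h; exact h2 (by linarith)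
    rw [hr1 n]; linarith [(hsb n).1, (hsb n).2]
  -- two-step facts
  have F1 : ∀ n, s (n+1) = a → d2 (n+1) < c → d1 (n+1) ≤ 2*a - 2*b := by
    intro n hsa hy
    cases n with
    | zero => rw [hr1 0, h10]; linarith [hs0.2]
    | succ m =>
      have h2 : ¬ (d2 (m+1) - 2*(t (m+1)) < 0) := fun h => hab (hsa.symm.trans ((hs (m+1)).2.2 h))
      have h2' : 2*(t (m+1)) ≤ d2 (m+1) := by by_contra h; exact h2 (by linarith)
      rcases (ht m).1 with h | h
      · exfalso
        rw [hr2 (m+1)] at hy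
        rw [h] at h2'
        linarith
      · have := I4 m h
        rw [hr1 (m+1)]; linarith [(hsb (m+1)).2]
  have F2 : ∀ n, t (n+1) = d → -a < d1 (n+1) → d2 (n+1) ≤ 2*c - 2*d := by
    intro n htd hx
    cases n with
    | zero => rw [hr2 0, h20]; linarith [ht0.1]
    | succ m =>
      have h2 : ¬ (0 < d1 (m+1) + 2*(s (m+1))) := fun h => hcd (((ht (m+1)).2.1 h).symm.trans htd)
      have h2' : d1 (m+1) ≤ -(2*(s (m+1))) := by by_contra h; exact h2 (by linarith)
      rcases (hs m).1 with h | h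
      · exfalso
        rw [hr1 (m+1)] at hx
        rw [h] at h2' hx
        linarith
      · have := I2 m h
        rw [hr2 (m+1)]; linarith [(htb (m+1)).1]
  have F3 : ∀ n, t (n+1) = c → d1 (n+1) < -b → 2*d - 2*c ≤ d2 (n+1) := by
    intro n htc hx
    cases n with
    | zero => rw [hr2 0, h20]; linarith [ht0.2]
    | succ m =>
      have h2 : ¬ (d1 (m+1) + 2*(s (m+1)) < 0) := fun h => hcd (htc.symm.trans ((ht (m+1)).2.2 h))
      have h2' : -(2*(s (m+1))) ≤ d1 (m+1) := by by_contra h; exact h2 (by linarith)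
      rcases (hs m).1 with h | h
      · have := I1 m h
        rw [hr2 (m+1)]; linarith [(htb (m+1)).2]
      · exfalso
        rw [hr1 (m+1)] at hx
        rw [h] at h2' hx
        linarith
  have F4 : ∀ n, s (n+1) = b → d < d2 (n+1) → 2*b - 2*a ≤ d1 (n+1) := by
    intro n hsb' hy
    cases n with
    | zero => rw [hr1 0, h10]; linarith [hs0.1]
    | succ m =>
      have h2 : ¬ (0 < d2 (m+1) - 2*(t (m+1))) := fun h => hab (((hs (m+1)).2.1 h).symm.trans hsb')
      have h2' : d2 (m+1) ≤ 2*(t (m+1)) := by by_contra h; exact h2 (by linarith)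
      rcases (ht m).1 with h | h
      · have := I3 m h
        rw [hr1 (m+1)]; linarith [(hsb (m+1)).1]
      · exfalso
        rw [hr2 (m+1)] at hy
        rw [h] at h2' hy
        linarith
  -- induction
  intro n
  induction n with
  | zero =>
    rw [h10, h20]
    unfold Hfun
    simp only [neg_zero, max_self]
    nlinarith
  | succ n ih =>
    cases n with
    | zero =>
      -- H at time 1: d1 1 = s 0, d2 1 = - t 0, both small
      have e1 : d1 1 = s 0 := by rw [hr1 0, h10]; ring
      have e2 : d2 1 = -(t 0) := by rw [hr2 0, h20]; ring
      have hx : |d1 1| ≤ 8*(a-b+c-d) := by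
        rw [e1, abs_le]; constructor <;> linarith [hs0.1, hs0.2]
      have hy : |d2 1| ≤ 8*(a-b+c-d) := by
        rw [e2, abs_le]; constructor <;> linarith [ht0.1, ht0.2]
      calc Hfun a b c d (d1 1) (d2 1) ≤ (a-b+c-d) * (8*(a-b+c-d)) :=
            Hbound a b c d _ _ _ ha hb hc hd hx hy
        _ = 8*(a-b+c-d)^2 := by ring
    | succ m =>
      rw [hr1 (m+1), hr2 (m+1)]
      exact stepH a b c d ha hb hc hd (d1 (m+1)) (d2 (m+1)) (s (m+1)) (t (m+1))
        (hs m).1 (ht m).1 (I1 m) (I2 m) (I3 m) (I4 m) (F1 m) (F2 m) (F3 m) (F4 m) ih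

lemma mem_simplex_iff (x : Fin 2 → ℝ) :
    x ∈ stdSimplex ℝ (Fin 2) ↔ (0 ≤ x 0 ∧ 0 ≤ x 1) ∧ x 0 + x 1 = 1 := by
  constructor
  · rintro ⟨h1, h2⟩
    rw [Fin.sum_univ_two] at h2
    exact ⟨⟨h1 0, h1 1⟩, h2⟩
  · rintro ⟨⟨h0, h1⟩, h2⟩
    refine ⟨fun j => ?_, ?_⟩
    · fin_cases j <;> assumption
    · rw [Fin.sum_univ_two]; exact h2

lemma dot2 (u v : Fin 2 → ℝ) : u ⬝ᵥ v = u 0 * v 0 + u 1 * v 1 := by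
  simp [dotProduct, Fin.sum_univ_two]

lemma mulVec2 (A : Matrix (Fin 2) (Fin 2) ℝ) (x : Fin 2 → ℝ) (i : Fin 2) :
    A.mulVec x i = A i 0 * x 0 + A i 1 * x 1 := by
  simp [Matrix.mulVec, dotProduct, Fin.sum_univ_two]

lemma single2_0 : (Pi.single 0 1 : Fin 2 → ℝ) 0 = 1 ∧ (Pi.single 0 1 : Fin 2 → ℝ) 1 = 0 := by
  constructor <;> simp [Pi.single_apply]

lemma single2_1 : (Pi.single 1 1 : Fin 2 → ℝ) 0 = 0 ∧ (Pi.single 1 1 : Fin 2 → ℝ) 1 = 1 := by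
  constructor <;> simp [Pi.single_apply]

lemma single_mem (i : Fin 2) : (Pi.single i (1:ℝ)) ∈ stdSimplex ℝ (Fin 2) := by
  rw [mem_simplex_iff]
  fin_cases i <;> simp [Pi.single_apply]

lemma signs_ab (A : Matrix (Fin 2) (Fin 2) ℝ) (xs₁ xs₂ : Fin 2 → ℝ)
    (hNE : IsNashEq A xs₁ xs₂)
    (hUniq : ∀ x₁' x₂', IsNashEq A x₁' x₂' → x₁' = xs₁ ∧ x₂' = xs₂)
    (hInt₁ : ∀ i, 0 < xs₁ i) (hInt₂ : ∀ i, 0 < xs₂ i) :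
    (0 < A 0 0 - A 1 0 ∧ A 0 1 - A 1 1 < 0) ∨ (A 0 0 - A 1 0 < 0 ∧ 0 < A 0 1 - A 1 1) := by
  obtain ⟨h1s, h2s, hbr1, hbr2⟩ := hNE
  obtain ⟨⟨hp1, hq1⟩, hs1⟩ := (mem_simplex_iff xs₁).mp h1s
  obtain ⟨⟨hp2, hq2⟩, hs2⟩ := (mem_simplex_iff xs₂).mp h2s
  -- indifference of player 1
  have hle0 := hbr1 (Pi.single 0 1) (single_mem 0)
  have hle1 := hbr1 (Pi.single 1 1) (single_mem 1)
  rw [dot2, single2_0.1, single2_0.2] at hle0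
  rw [dot2, single2_1.1, single2_1.2] at hle1
  rw [dot2] at hle0 hle1
  have key0 : xs₁ 0 * (A *ᵥ xs₂) 0 + xs₁ 1 * (A *ᵥ xs₂) 0 = (A *ᵥ xs₂) 0 := by
    linear_combination ((A *ᵥ xs₂) 0) * hs1
  have key1 : xs₁ 0 * (A *ᵥ xs₂) 1 + xs₁ 1 * (A *ᵥ xs₂) 1 = (A *ᵥ xs₂) 1 := by
    linear_combination ((A *ᵥ xs₂) 1) * hs1
  have hind : A.mulVec xs₂ 0 = A.mulVec xs₂ 1 := by
    have h01 : A.mulVec xs₂ 0 ≤ A.mulVec xs₂ 1 := by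
      by_contra h
      push_neg at h
      have := mul_pos (hInt₁ 1) (sub_pos.mpr h)
      nlinarith
    have h10 : A.mulVec xs₂ 1 ≤ A.mulVec xs₂ 0 := by
      by_contra h
      push_neg at h
      have := mul_pos (hInt₁ 0) (sub_pos.mpr h)
      nlinarith
    linarith
  rw [mulVec2, mulVec2] at hind
  have hz : (A 0 0 - A 1 0) * xs₂ 0 + (A 0 1 - A 1 1) * xs₂ 1 = 0 := by linarith
  rcases lt_trichotomy (A 0 0 - A 1 0) 0 with hA | hA | hA
  · right
    refine ⟨hA, ?_⟩
    nlinarith [hInt₂ 0, hInt₂ 1]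
  · -- degenerate: rows equal, contradiction with uniqueness
    exfalso
    have hb : A 0 1 - A 1 1 = 0 := by
      rcases lt_trichotomy (A 0 1 - A 1 1) 0 with h | h | h
      · nlinarith [hInt₂ 0, hInt₂ 1]
      · exact h
      · nlinarith [hInt₂ 0, hInt₂ 1]
    have e1 : A 1 0 = A 0 0 := by linarith
    have e2 : A 1 1 = A 0 1 := by linarith
    rcases le_total (A 0 1) (A 0 0) with hcase | hcase
    · -- (xs₁, e₁) is a NE
      have l1 : ∀ z : Fin 2 → ℝ, z 0 + z 1 = 1 →
          z ⬝ᵥ A.mulVec (Pi.single 1 1) = A 0 1 := by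
        intro z hzs
        rw [dot2, mulVec2, mulVec2, single2_1.1, single2_1.2]
        linear_combination (A 0 1) * hzs + z 1 * e2
      have hne : IsNashEq A xs₁ (Pi.single 1 1) := by
        refine ⟨h1s, single_mem 1, ?_, ?_⟩
        · intro x hx
          obtain ⟨⟨hx0, hx1⟩, hxs⟩ := (mem_simplex_iff x).mp hx
          rw [l1 x hxs, l1 xs₁ hs1]
        · intro y hy
          obtain ⟨⟨hy0, hy1⟩, hys⟩ := (mem_simplex_iff y).mp hy
          rw [l1 xs₁ hs1]
          have r1 : xs₁ ⬝ᵥ A.mulVec y = A 0 0 * y 0 + A 0 1 * y 1 := by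
            rw [dot2, mulVec2, mulVec2]
            linear_combination (A 0 0 * y 0 + A 0 1 * y 1) * hs1 + xs₁ 1 * y 0 * e1 + xs₁ 1 * y 1 * e2
          rw [r1]
          have hA01 : A 0 1 * (y 0 + y 1) = A 0 1 := by rw [hys, mul_one]
          nlinarith [mul_nonneg hy0 (sub_nonneg.mpr hcase)]
      have h0 := congrFun (hUniq _ _ hne).2 0
      rw [single2_1.1] at h0
      exact (hInt₂ 0).ne h0
    · have l1 : ∀ z : Fin 2 → ℝ, z 0 + z 1 = 1 →
          z ⬝ᵥ A.mulVec (Pi.single 0 1) = A 0 0 := by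
        intro z hzs
        rw [dot2, mulVec2, mulVec2, single2_0.1, single2_0.2]
        linear_combination (A 0 0) * hzs + z 1 * e1
      have hne : IsNashEq A xs₁ (Pi.single 0 1) := by
        refine ⟨h1s, single_mem 0, ?_, ?_⟩
        · intro x hx
          obtain ⟨⟨hx0, hx1⟩, hxs⟩ := (mem_simplex_iff x).mp hx
          rw [l1 x hxs, l1 xs₁ hs1]
        · intro y hy
          obtain ⟨⟨hy0, hy1⟩, hys⟩ := (mem_simplex_iff y).mp hy
          rw [l1 xs₁ hs1]
          have r1 : xs₁ ⬝ᵥ A.mulVec y = A 0 0 * y 0 + A 0 1 * y 1 := by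
            rw [dot2, mulVec2, mulVec2]
            linear_combination (A 0 0 * y 0 + A 0 1 * y 1) * hs1 + xs₁ 1 * y 0 * e1 + xs₁ 1 * y 1 * e2
          rw [r1]
          have hA00 : A 0 0 * (y 0 + y 1) = A 0 0 := by rw [hys, mul_one]
          nlinarith [mul_nonneg hy1 (sub_nonneg.mpr hcase)]
      have h0 := congrFun (hUniq _ _ hne).2 1
      rw [single2_0.2] at h0
      exact (hInt₂ 1).ne h0
  · left
    refine ⟨hA, ?_⟩
    nlinarith [hInt₂ 0, hInt₂ 1]

lemma signs_cd (A : Matrix (Fin 2) (Fin 2) ℝ) (xs₁ xs₂ : Fin 2 → ℝ)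
    (hNE : IsNashEq A xs₁ xs₂)
    (hUniq : ∀ x₁' x₂', IsNashEq A x₁' x₂' → x₁' = xs₁ ∧ x₂' = xs₂)
    (hInt₁ : ∀ i, 0 < xs₁ i) (hInt₂ : ∀ i, 0 < xs₂ i) :
    (0 < A 0 0 - A 0 1 ∧ A 1 0 - A 1 1 < 0) ∨ (A 0 0 - A 0 1 < 0 ∧ 0 < A 1 0 - A 1 1) := by
  obtain ⟨h1s, h2s, hbr1, hbr2⟩ := hNE
  obtain ⟨⟨hp1, hq1⟩, hs1⟩ := (mem_simplex_iff xs₁).mp h1s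
  obtain ⟨⟨hp2, hq2⟩, hs2⟩ := (mem_simplex_iff xs₂).mp h2s
  -- indifference of player 2
  have hle0 := hbr2 (Pi.single 0 1) (single_mem 0)
  have hle1 := hbr2 (Pi.single 1 1) (single_mem 1)
  have emix : xs₁ ⬝ᵥ A.mulVec xs₂ =
      xs₂ 0 * (xs₁ 0 * A 0 0 + xs₁ 1 * A 1 0) + xs₂ 1 * (xs₁ 0 * A 0 1 + xs₁ 1 * A 1 1) := by
    rw [dot2, mulVec2, mulVec2]; ring
  have e0' : xs₁ ⬝ᵥ A.mulVec (Pi.single 0 1) = xs₁ 0 * A 0 0 + xs₁ 1 * A 1 0 := by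
    rw [dot2, mulVec2, mulVec2, single2_0.1, single2_0.2]; ring
  have e1' : xs₁ ⬝ᵥ A.mulVec (Pi.single 1 1) = xs₁ 0 * A 0 1 + xs₁ 1 * A 1 1 := by
    rw [dot2, mulVec2, mulVec2, single2_1.1, single2_1.2]; ring
  rw [emix, e0'] at hle0
  rw [emix, e1'] at hle1
  have hind : xs₁ 0 * A 0 0 + xs₁ 1 * A 1 0 = xs₁ 0 * A 0 1 + xs₁ 1 * A 1 1 := by
    set u0 := xs₁ 0 * A 0 0 + xs₁ 1 * A 1 0
    set u1 := xs₁ 0 * A 0 1 + xs₁ 1 * A 1 1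
    have key0 : xs₂ 0 * u0 + xs₂ 1 * u0 = u0 := by linear_combination u0 * hs2
    have key1 : xs₂ 0 * u1 + xs₂ 1 * u1 = u1 := by linear_combination u1 * hs2
    have h01 : u1 ≤ u0 := by
      by_contra h
      push_neg at h
      have := mul_pos (hInt₂ 1) (sub_pos.mpr h)
      nlinarith
    have h10 : u0 ≤ u1 := by
      by_contra h
      push_neg at h
      have := mul_pos (hInt₂ 0) (sub_pos.mpr h)
      nlinarith
    linarith
  have hz : (A 0 0 - A 0 1) * xs₁ 0 + (A 1 0 - A 1 1) * xs₁ 1 = 0 := by linarith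
  rcases lt_trichotomy (A 0 0 - A 0 1) 0 with hA | hA | hA
  · right
    refine ⟨hA, ?_⟩
    by_contra h
    push_neg at h
    linarith [mul_neg_of_neg_of_pos hA (hInt₁ 0), mul_nonpos_of_nonpos_of_nonneg h (le_of_lt (hInt₁ 1))]
  · exfalso
    have hb : A 1 0 - A 1 1 = 0 := by
      rcases lt_trichotomy (A 1 0 - A 1 1) 0 with h | h | h
      · linarith [mul_neg_of_neg_of_pos h (hInt₁ 1), mul_eq_zero_of_left hA (xs₁ 0)]
      · exact h
      · linarith [mul_pos h (hInt₁ 1), mul_eq_zero_of_left hA (xs₁ 0)]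
    have e1 : A 0 1 = A 0 0 := by linarith
    have e2 : A 1 1 = A 1 0 := by linarith
    have r1 : ∀ x : Fin 2 → ℝ, x ⬝ᵥ A.mulVec xs₂ = A 0 0 * x 0 + A 1 0 * x 1 := by
      intro x
      rw [dot2, mulVec2, mulVec2]
      linear_combination (x 0 * A 0 0 + x 1 * A 1 0) * hs2 + x 0 * xs₂ 1 * e1 + x 1 * xs₂ 1 * e2
    rcases le_total (A 1 0) (A 0 0) with hcase | hcase
    · have l1 : ∀ z : Fin 2 → ℝ, z 0 + z 1 = 1 →
          (Pi.single 0 1 : Fin 2 → ℝ) ⬝ᵥ A.mulVec z = A 0 0 := by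
        intro z hzs
        rw [dot2, mulVec2, mulVec2, single2_0.1, single2_0.2]
        linear_combination (A 0 0) * hzs + z 1 * e1
      have hne : IsNashEq A (Pi.single 0 1) xs₂ := by
        refine ⟨single_mem 0, h2s, ?_, ?_⟩
        · intro x hx
          obtain ⟨⟨hx0, hx1⟩, hxs⟩ := (mem_simplex_iff x).mp hx
          rw [r1 x, l1 xs₂ hs2]
          have hA00 : A 0 0 * (x 0 + x 1) = A 0 0 := by rw [hxs, mul_one]
          nlinarith [mul_nonneg hx1 (sub_nonneg.mpr hcase)]
        · intro y hy
          obtain ⟨⟨hy0, hy1⟩, hys⟩ := (mem_simplex_iff y).mp hy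
          rw [l1 xs₂ hs2, l1 y hys]
      have h0 := congrFun (hUniq _ _ hne).1 1
      rw [single2_0.2] at h0
      exact (hInt₁ 1).ne h0
    · have l1 : ∀ z : Fin 2 → ℝ, z 0 + z 1 = 1 →
          (Pi.single 1 1 : Fin 2 → ℝ) ⬝ᵥ A.mulVec z = A 1 0 := by
        intro z hzs
        rw [dot2, mulVec2, mulVec2, single2_1.1, single2_1.2]
        linear_combination (A 1 0) * hzs + z 1 * e2
      have hne : IsNashEq A (Pi.single 1 1) xs₂ := by
        refine ⟨single_mem 1, h2s, ?_, ?_⟩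
        · intro x hx
          obtain ⟨⟨hx0, hx1⟩, hxs⟩ := (mem_simplex_iff x).mp hx
          rw [r1 x, l1 xs₂ hs2]
          have hA10 : A 1 0 * (x 0 + x 1) = A 1 0 := by rw [hxs, mul_one]
          nlinarith [mul_nonneg hx0 (sub_nonneg.mpr hcase)]
        · intro y hy
          obtain ⟨⟨hy0, hy1⟩, hys⟩ := (mem_simplex_iff y).mp hy
          rw [l1 xs₂ hs2, l1 y hys]
      have h0 := congrFun (hUniq _ _ hne).1 0
      rw [single2_1.1] at h0
      exact (hInt₁ 0).ne h0
  · left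
    refine ⟨hA, ?_⟩
    by_contra h
    push_neg at h
    linarith [mul_pos hA (hInt₁ 0), mul_nonneg h (le_of_lt (hInt₁ 1))]

lemma run_reduction (A : Matrix (Fin 2) (Fin 2) ℝ) (x₁ x₂ y₁ y₂ : ℕ → Fin 2 → ℝ)
    (hrun : IsOFPRun A x₁ x₂ y₁ y₂) :
    (y₁ 0 0 - y₁ 0 1 = 0) ∧ (y₂ 0 0 - y₂ 0 1 = 0) ∧
    (∀ n, y₁ (n+1) 0 - y₁ (n+1) 1 =
      (y₁ n 0 - y₁ n 1) + (A.mulVec (x₂ n) 0 - A.mulVec (x₂ n) 1)) ∧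
    (∀ n, y₂ (n+1) 0 - y₂ (n+1) 1 =
      (y₂ n 0 - y₂ n 1) - (Aᵀ.mulVec (x₁ n) 0 - Aᵀ.mulVec (x₁ n) 1)) ∧
    (∀ n, ((A.mulVec (x₂ (n+1)) 0 - A.mulVec (x₂ (n+1)) 1 = A 0 0 - A 1 0) ∨
           (A.mulVec (x₂ (n+1)) 0 - A.mulVec (x₂ (n+1)) 1 = A 0 1 - A 1 1)) ∧
      (0 < (y₂ n 0 - y₂ n 1) - 2*(Aᵀ.mulVec (x₁ n) 0 - Aᵀ.mulVec (x₁ n) 1) →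
        A.mulVec (x₂ (n+1)) 0 - A.mulVec (x₂ (n+1)) 1 = A 0 0 - A 1 0) ∧
      ((y₂ n 0 - y₂ n 1) - 2*(Aᵀ.mulVec (x₁ n) 0 - Aᵀ.mulVec (x₁ n) 1) < 0 →
        A.mulVec (x₂ (n+1)) 0 - A.mulVec (x₂ (n+1)) 1 = A 0 1 - A 1 1)) ∧
    (∀ n, ((Aᵀ.mulVec (x₁ (n+1)) 0 - Aᵀ.mulVec (x₁ (n+1)) 1 = A 0 0 - A 0 1) ∨
           (Aᵀ.mulVec (x₁ (n+1)) 0 - Aᵀ.mulVec (x₁ (n+1)) 1 = A 1 0 - A 1 1)) ∧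
      (0 < (y₁ n 0 - y₁ n 1) + 2*(A.mulVec (x₂ n) 0 - A.mulVec (x₂ n) 1) →
        Aᵀ.mulVec (x₁ (n+1)) 0 - Aᵀ.mulVec (x₁ (n+1)) 1 = A 0 0 - A 0 1) ∧
      ((y₁ n 0 - y₁ n 1) + 2*(A.mulVec (x₂ n) 0 - A.mulVec (x₂ n) 1) < 0 →
        Aᵀ.mulVec (x₁ (n+1)) 0 - Aᵀ.mulVec (x₁ (n+1)) 1 = A 1 0 - A 1 1)) ∧
    (A.mulVec (x₂ 0) 0 - A.mulVec (x₂ 0) 1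
      = (A 0 0 - A 1 0) * x₂ 0 0 + (A 0 1 - A 1 1) * x₂ 0 1) ∧
    (Aᵀ.mulVec (x₁ 0) 0 - Aᵀ.mulVec (x₁ 0) 1
      = (A 0 0 - A 0 1) * x₁ 0 0 + (A 1 0 - A 1 1) * x₁ 0 1) := by
  obtain ⟨hy10, hy20, hx10, hx20, hrec1, hrec2, ham1, ham2⟩ := hrun
  have hT2 : ∀ (x : Fin 2 → ℝ) (i : Fin 2), Aᵀ.mulVec x i = A 0 i * x 0 + A 1 i * x 1 := by
    intro x i
    rw [mulVec2]
    simp [Matrix.transpose_apply]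
  refine ⟨by rw [hy10]; simp, by rw [hy20]; simp, ?_, ?_, ?_, ?_, ?_, ?_⟩
  · intro n; rw [hrec1 n]; simp [Pi.add_apply]; ring
  · intro n; rw [hrec2 n]; simp [Pi.sub_apply]; ring
  · -- player 2 decision
    intro n
    obtain ⟨i, hxi, hmax⟩ := ham2 n
    have hv : ∀ j : Fin 2, (y₂ (n+1) - Aᵀ.mulVec (x₁ n)) j ≤ (y₂ (n+1) - Aᵀ.mulVec (x₁ n)) i := by
      intro j
      have := hmax j
      rw [hxi, single_dotProduct, single_dotProduct, one_mul, one_mul] at this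
      exact this
    have hdiff : (y₂ (n+1) - Aᵀ.mulVec (x₁ n)) 0 - (y₂ (n+1) - Aᵀ.mulVec (x₁ n)) 1
        = (y₂ n 0 - y₂ n 1) - 2*(Aᵀ.mulVec (x₁ n) 0 - Aᵀ.mulVec (x₁ n) 1) := by
      rw [hrec2 n]; simp only [Pi.sub_apply]; ring
    have hva : x₂ (n+1) = Pi.single 0 1 →
        A.mulVec (x₂ (n+1)) 0 - A.mulVec (x₂ (n+1)) 1 = A 0 0 - A 1 0 := by
      intro h
      rw [h, mulVec2, mulVec2, single2_0.1, single2_0.2]; ring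
    have hvb : x₂ (n+1) = Pi.single 1 1 →
        A.mulVec (x₂ (n+1)) 0 - A.mulVec (x₂ (n+1)) 1 = A 0 1 - A 1 1 := by
      intro h
      rw [h, mulVec2, mulVec2, single2_1.1, single2_1.2]; ring
    have hior : i = 0 ∨ i = 1 := by omega
    refine ⟨?_, ?_, ?_⟩
    · rcases hior with h | h <;> rw [h] at hxi
      · exact Or.inl (hva hxi)
      · exact Or.inr (hvb hxi)
    · intro hpos
      rcases hior with h | h <;> rw [h] at hxi hv
      · exact hva hxi
      · exfalso; have := hv 0; linarith
    · intro hneg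
      rcases hior with h | h <;> rw [h] at hxi hv
      · exfalso; have := hv 1; linarith
      · exact hvb hxi
  · -- player 1 decision
    intro n
    obtain ⟨i, hxi, hmax⟩ := ham1 n
    have hv : ∀ j : Fin 2, (y₁ (n+1) + A.mulVec (x₂ n)) j ≤ (y₁ (n+1) + A.mulVec (x₂ n)) i := by
      intro j
      have := hmax j
      rw [hxi, single_dotProduct, single_dotProduct, one_mul, one_mul] at this
      exact this
    have hdiff : (y₁ (n+1) + A.mulVec (x₂ n)) 0 - (y₁ (n+1) + A.mulVec (x₂ n)) 1
        = (y₁ n 0 - y₁ n 1) + 2*(A.mulVec (x₂ n) 0 - A.mulVec (x₂ n) 1) := by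
      rw [hrec1 n]; simp only [Pi.add_apply]; ring
    have hva : x₁ (n+1) = Pi.single 0 1 →
        Aᵀ.mulVec (x₁ (n+1)) 0 - Aᵀ.mulVec (x₁ (n+1)) 1 = A 0 0 - A 0 1 := by
      intro h
      rw [h, hT2, hT2, single2_0.1, single2_0.2]; ring
    have hvb : x₁ (n+1) = Pi.single 1 1 →
        Aᵀ.mulVec (x₁ (n+1)) 0 - Aᵀ.mulVec (x₁ (n+1)) 1 = A 1 0 - A 1 1 := by
      intro h
      rw [h, hT2, hT2, single2_1.1, single2_1.2]; ring
    have hior : i = 0 ∨ i = 1 := by omega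
    refine ⟨?_, ?_, ?_⟩
    · rcases hior with h | h <;> rw [h] at hxi
      · exact Or.inl (hva hxi)
      · exact Or.inr (hvb hxi)
    · intro hpos
      rcases hior with h | h <;> rw [h] at hxi hv
      · exact hva hxi
      · exfalso; have := hv 0; linarith
    · intro hneg
      rcases hior with h | h <;> rw [h] at hxi hv
      · exfalso; have := hv 1; linarith
      · exact hvb hxi
  · rw [mulVec2, mulVec2]; ring
  · rw [hT2, hT2]; ring

lemma sup_le_max (S : Fin 2 → ℝ) :
    (⨆ x : stdSimplex ℝ (Fin 2), (x : Fin 2 → ℝ) ⬝ᵥ S) ≤ max (S 0) (S 1) := by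
  haveI : Nonempty ↑(stdSimplex ℝ (Fin 2)) := ⟨⟨Pi.single 0 1, single_mem 0⟩⟩
  apply ciSup_le
  rintro ⟨x, hx⟩
  obtain ⟨⟨hx0, hx1⟩, hxs⟩ := (mem_simplex_iff x).mp hx
  rw [dot2]
  have h0 := mul_le_mul_of_nonneg_left (le_max_left (S 0) (S 1)) hx0
  have h1 := mul_le_mul_of_nonneg_left (le_max_right (S 0) (S 1)) hx1
  have hkey : x 0 * max (S 0) (S 1) + x 1 * max (S 0) (S 1) = max (S 0) (S 1) := by
    linear_combination (max (S 0) (S 1)) * hxs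
  change x 0 * S 0 + x 1 * S 1 ≤ max (S 0) (S 1)
  linarith

lemma min_le_inf (S : Fin 2 → ℝ) :
    min (S 0) (S 1) ≤ ⨅ x : stdSimplex ℝ (Fin 2), (x : Fin 2 → ℝ) ⬝ᵥ S := by
  haveI : Nonempty ↑(stdSimplex ℝ (Fin 2)) := ⟨⟨Pi.single 0 1, single_mem 0⟩⟩
  apply le_ciInf
  rintro ⟨x, hx⟩
  obtain ⟨⟨hx0, hx1⟩, hxs⟩ := (mem_simplex_iff x).mp hx
  rw [dot2]
  have h0 := mul_le_mul_of_nonneg_left (min_le_left (S 0) (S 1)) hx0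
  have h1 := mul_le_mul_of_nonneg_left (min_le_right (S 0) (S 1)) hx1
  have hkey : x 0 * min (S 0) (S 1) + x 1 * min (S 0) (S 1) = min (S 0) (S 1) := by
    linear_combination (min (S 0) (S 1)) * hxs
  change min (S 0) (S 1) ≤ x 0 * S 0 + x 1 * S 1
  linarith

lemma max_le_combo (p q u0 u1 : ℝ) (hp : 0 ≤ p) (hq : 0 ≤ q) (hs : p + q = 1) :
    max u0 u1 ≤ p*u0 + q*u1 + |u0 - u1| := by
  have k0 : p*u0 + q*u0 = u0 := by linear_combination u0 * hs
  have k1 : p*u1 + q*u1 = u1 := by linear_combination u1 * hs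
  rcases le_total u0 u1 with h | h
  · rw [max_eq_right h, abs_of_nonpos (by linarith : u0 - u1 ≤ 0)]
    nlinarith [mul_le_mul_of_nonneg_left h hp]
  · rw [max_eq_left h, abs_of_nonneg (by linarith : 0 ≤ u0 - u1)]
    nlinarith [mul_le_mul_of_nonneg_left h hq]

lemma Hextract (a b c d x y B : ℝ) (ha : 0 < a) (hb : b < 0) (hc : 0 < c) (hd : d < 0)
    (h : Hfun a b c d x y ≤ B) :
    |x| ≤ B / min c (-d) ∧ |y| ≤ B / min a (-b) := by
  have hm1 : 0 < min c (-d) := lt_min hc (by linarith)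
  have hm2 : 0 < min a (-b) := lt_min ha (by linarith)
  unfold Hfun at h
  have key1 : min c (-d) * |x| ≤ c * max x 0 - d * max (-x) 0 := by
    rcases le_total x 0 with hx | hx
    · rw [abs_of_nonpos hx, max_eq_right hx, max_eq_left (by linarith : (0:ℝ) ≤ -x)]
      nlinarith [min_le_right c (-d)]
    · rw [abs_of_nonneg hx, max_eq_left hx, max_eq_right (by linarith : -x ≤ 0)]
      nlinarith [min_le_left c (-d)]
  have key2 : min a (-b) * |y| ≤ a * max y 0 - b * max (-y) 0 := by
    rcases le_total y 0 with hy | hy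
    · rw [abs_of_nonpos hy, max_eq_right hy, max_eq_left (by linarith : (0:ℝ) ≤ -y)]
      nlinarith [min_le_right a (-b)]
    · rw [abs_of_nonneg hy, max_eq_left hy, max_eq_right (by linarith : -y ≤ 0)]
      nlinarith [min_le_left a (-b)]
  have hb1 : a * max y 0 - b * max (-y) 0 ≥ 0 := by
    have := le_max_right y 0; have := le_max_right (-y) 0
    nlinarith [le_max_right y 0, le_max_right (-y) 0]
  have hb2 : c * max x 0 - d * max (-x) 0 ≥ 0 := by
    nlinarith [le_max_right x 0, le_max_right (-x) 0]
  constructor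
  · rw [le_div_iff₀ hm1, mul_comm]; linarith
  · rw [le_div_iff₀ hm2, mul_comm]; linarith

-- indifference of player 1 at an interior equilibrium
lemma indiff1 (A : Matrix (Fin 2) (Fin 2) ℝ) (xs₁ xs₂ : Fin 2 → ℝ)
    (hNE : IsNashEq A xs₁ xs₂) (hInt₁ : ∀ i, 0 < xs₁ i) :
    A 0 0 * xs₂ 0 + A 0 1 * xs₂ 1 = A 1 0 * xs₂ 0 + A 1 1 * xs₂ 1 := by
  obtain ⟨h1s, h2s, hbr1, hbr2⟩ := hNE
  obtain ⟨⟨hp1, hq1⟩, hs1⟩ := (mem_simplex_iff xs₁).mp h1s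
  have hle0 := hbr1 (Pi.single 0 1) (single_mem 0)
  have hle1 := hbr1 (Pi.single 1 1) (single_mem 1)
  rw [dot2, single2_0.1, single2_0.2] at hle0
  rw [dot2, single2_1.1, single2_1.2] at hle1
  rw [dot2] at hle0 hle1
  have key0 : xs₁ 0 * (A *ᵥ xs₂) 0 + xs₁ 1 * (A *ᵥ xs₂) 0 = (A *ᵥ xs₂) 0 := by
    linear_combination ((A *ᵥ xs₂) 0) * hs1
  have key1 : xs₁ 0 * (A *ᵥ xs₂) 1 + xs₁ 1 * (A *ᵥ xs₂) 1 = (A *ᵥ xs₂) 1 := by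
    linear_combination ((A *ᵥ xs₂) 1) * hs1
  have hind : A.mulVec xs₂ 0 = A.mulVec xs₂ 1 := by
    have h01 : A.mulVec xs₂ 0 ≤ A.mulVec xs₂ 1 := by
      by_contra h
      push_neg at h
      have := mul_pos (hInt₁ 1) (sub_pos.mpr h)
      nlinarith
    have h10 : A.mulVec xs₂ 1 ≤ A.mulVec xs₂ 0 := by
      by_contra h
      push_neg at h
      have := mul_pos (hInt₁ 0) (sub_pos.mpr h)
      nlinarith
    linarith
  rw [mulVec2, mulVec2] at hind
  exact hind

-- indifference of player 2 at an interior equilibrium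
lemma indiff2 (A : Matrix (Fin 2) (Fin 2) ℝ) (xs₁ xs₂ : Fin 2 → ℝ)
    (hNE : IsNashEq A xs₁ xs₂) (hInt₂ : ∀ i, 0 < xs₂ i) :
    xs₁ 0 * A 0 0 + xs₁ 1 * A 1 0 = xs₁ 0 * A 0 1 + xs₁ 1 * A 1 1 := by
  obtain ⟨h1s, h2s, hbr1, hbr2⟩ := hNE
  obtain ⟨⟨hp2, hq2⟩, hs2⟩ := (mem_simplex_iff xs₂).mp h2s
  have hle0 := hbr2 (Pi.single 0 1) (single_mem 0)
  have hle1 := hbr2 (Pi.single 1 1) (single_mem 1)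
  have emix : xs₁ ⬝ᵥ A.mulVec xs₂ =
      xs₂ 0 * (xs₁ 0 * A 0 0 + xs₁ 1 * A 1 0) + xs₂ 1 * (xs₁ 0 * A 0 1 + xs₁ 1 * A 1 1) := by
    rw [dot2, mulVec2, mulVec2]; ring
  have e0' : xs₁ ⬝ᵥ A.mulVec (Pi.single 0 1) = xs₁ 0 * A 0 0 + xs₁ 1 * A 1 0 := by
    rw [dot2, mulVec2, mulVec2, single2_0.1, single2_0.2]; ring
  have e1' : xs₁ ⬝ᵥ A.mulVec (Pi.single 1 1) = xs₁ 0 * A 0 1 + xs₁ 1 * A 1 1 := by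
    rw [dot2, mulVec2, mulVec2, single2_1.1, single2_1.2]; ring
  rw [emix, e0'] at hle0
  rw [emix, e1'] at hle1
  set u0 := xs₁ 0 * A 0 0 + xs₁ 1 * A 1 0
  set u1 := xs₁ 0 * A 0 1 + xs₁ 1 * A 1 1
  have key0 : xs₂ 0 * u0 + xs₂ 1 * u0 = u0 := by linear_combination u0 * hs2
  have key1 : xs₂ 0 * u1 + xs₂ 1 * u1 = u1 := by linear_combination u1 * hs2
  have h01 : u1 ≤ u0 := by
    by_contra h
    push_neg at h
    have := mul_pos (hInt₂ 1) (sub_pos.mpr h)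
    nlinarith
  have h10 : u0 ≤ u1 := by
    by_contra h
    push_neg at h
    have := mul_pos (hInt₂ 0) (sub_pos.mpr h)
    nlinarith
  linarith

theorem ofp_constant_regret_2x2
    (A : Matrix (Fin 2) (Fin 2) ℝ) (xs₁ xs₂ : Fin 2 → ℝ)
    (hNE : IsNashEq A xs₁ xs₂)
    (hUniq : ∀ x₁' x₂', IsNashEq A x₁' x₂' → x₁' = xs₁ ∧ x₂' = xs₂)
    (hInt₁ : ∀ i, 0 < xs₁ i) (hInt₂ : ∀ i, 0 < xs₂ i) :
    ∃ C : ℝ, ∀ (x₁ x₂ y₁ y₂ : ℕ → Fin 2 → ℝ),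
      IsOFPRun A x₁ x₂ y₁ y₂ → ∀ T : ℕ, totalRegret A x₁ x₂ T ≤ C := by
  have hab := signs_ab A xs₁ xs₂ hNE hUniq hInt₁ hInt₂
  have hcd := signs_cd A xs₁ xs₂ hNE hUniq hInt₁ hInt₂
  have hind1 := indiff1 A xs₁ xs₂ hNE hInt₁
  have hind2 := indiff2 A xs₁ xs₂ hNE hInt₂
  obtain ⟨h1s, h2s, -, -⟩ := hNE
  obtain ⟨⟨hp1, hq1⟩, hs1⟩ := (mem_simplex_iff xs₁).mp h1s
  obtain ⟨⟨hp2, hq2⟩, hs2⟩ := (mem_simplex_iff xs₂).mp h2s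
  set a := A 0 0 - A 1 0 with ha_def
  set b := A 0 1 - A 1 1 with hb_def
  set c := A 0 0 - A 0 1 with hc_def
  set d := A 1 0 - A 1 1 with hd_def
  have hkey : a - b = c - d := by rw [ha_def, hb_def, hc_def, hd_def]; ring
  have horient : (0 < a ∧ b < 0 ∧ 0 < c ∧ d < 0) ∨ (a < 0 ∧ 0 < b ∧ c < 0 ∧ 0 < d) := by
    rcases hab with ⟨h1, h2⟩ | ⟨h1, h2⟩ <;> rcases hcd with ⟨h3, h4⟩ | ⟨h3, h4⟩
    · exact Or.inl ⟨h1, h2, h3, h4⟩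
    · exfalso; linarith
    · exfalso; linarith
    · exact Or.inr ⟨h1, h2, h3, h4⟩
  -- the common part: a bound on |d1 (T+1)| + |d2 (T+1)| yields the regret bound
  have main : ∀ K : ℝ, (∀ (x₁ x₂ y₁ y₂ : ℕ → Fin 2 → ℝ), IsOFPRun A x₁ x₂ y₁ y₂ →
      ∀ n, |y₁ n 0 - y₁ n 1| + |y₂ n 0 - y₂ n 1| ≤ K) →
      ∀ (x₁ x₂ y₁ y₂ : ℕ → Fin 2 → ℝ), IsOFPRun A x₁ x₂ y₁ y₂ →
      ∀ T, totalRegret A x₁ x₂ T ≤ K := by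
    intro K hK x₁ x₂ y₁ y₂ hrun T
    have hbd := hK x₁ x₂ y₁ y₂ hrun (T+1)
    obtain ⟨hy10, hy20, hx10, hx20, hrec1, hrec2, ham1, ham2⟩ := hrun
    -- sums of coordinates are 1 along the run
    have hx1s : ∀ n, 0 ≤ x₁ n 0 ∧ 0 ≤ x₁ n 1 ∧ x₁ n 0 + x₁ n 1 = 1 := by
      intro n
      cases n with
      | zero =>
        obtain ⟨⟨h0, h1⟩, hsum⟩ := (mem_simplex_iff (x₁ 0)).mp hx10
        exact ⟨h0, h1, hsum⟩
      | succ m =>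
        obtain ⟨i, hxi, -⟩ := ham1 m
        have hior : i = 0 ∨ i = 1 := by omega
        rcases hior with h | h <;> rw [h] at hxi <;> rw [hxi]
        · rw [single2_0.1, single2_0.2]; norm_num
        · rw [single2_1.1, single2_1.2]; norm_num
    have hx2s : ∀ n, 0 ≤ x₂ n 0 ∧ 0 ≤ x₂ n 1 ∧ x₂ n 0 + x₂ n 1 = 1 := by
      intro n
      cases n with
      | zero =>
        obtain ⟨⟨h0, h1⟩, hsum⟩ := (mem_simplex_iff (x₂ 0)).mp hx20
        exact ⟨h0, h1, hsum⟩
      | succ m =>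
        obtain ⟨i, hxi, -⟩ := ham2 m
        have hior : i = 0 ∨ i = 1 := by omega
        rcases hior with h | h <;> rw [h] at hxi <;> rw [hxi]
        · rw [single2_0.1, single2_0.2]; norm_num
        · rw [single2_1.1, single2_1.2]; norm_num
    -- the xs-weighted sums vanish (zero-sum telescoping)
    have hLR : xs₁ 0 * A 0 0 + xs₁ 1 * A 1 0 = A 0 0 * xs₂ 0 + A 0 1 * xs₂ 1 := by
      linear_combination (-(xs₁ 0 * A 0 0 + xs₁ 1 * A 1 0)) * hs2 + xs₂ 1 * hind2
        + (A 0 0 * xs₂ 0 + A 0 1 * xs₂ 1) * hs1 - xs₁ 1 * hind1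
    have hzero : ∀ n, xs₁ 0 * y₁ n 0 + xs₁ 1 * y₁ n 1
        + (xs₂ 0 * y₂ n 0 + xs₂ 1 * y₂ n 1) = 0 := by
      intro n
      induction n with
      | zero => rw [hy10, hy20]; simp
      | succ m ih =>
        have t1 : xs₁ 0 * (A.mulVec (x₂ m)) 0 + xs₁ 1 * (A.mulVec (x₂ m)) 1
            = xs₁ 0 * A 0 0 + xs₁ 1 * A 1 0 := by
          rw [mulVec2, mulVec2]
          linear_combination (xs₁ 0 * A 0 0 + xs₁ 1 * A 1 0) * (hx2s m).2.2 - x₂ m 1 * hind2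
        have t2 : xs₂ 0 * (Aᵀ.mulVec (x₁ m)) 0 + xs₂ 1 * (Aᵀ.mulVec (x₁ m)) 1
            = A 0 0 * xs₂ 0 + A 0 1 * xs₂ 1 := by
          rw [mulVec2, mulVec2]
          simp only [Matrix.transpose_apply]
          linear_combination (A 0 0 * xs₂ 0 + A 0 1 * xs₂ 1) * (hx1s m).2.2 - x₁ m 1 * hind1
        rw [hrec1 m, hrec2 m]
        simp only [Pi.add_apply, Pi.sub_apply]
        linear_combination ih + t1 - t2 + hLR
    -- regret ≤ max + max
    have hY1 : ∀ n, y₁ n = ∑ t ∈ Finset.range n, A.mulVec (x₂ t) := by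
      intro n
      induction n with
      | zero => simpa using hy10
      | succ k ih => rw [Finset.sum_range_succ, ← ih, hrec1 k]
    have hY2 : ∀ n, y₂ n = - ∑ t ∈ Finset.range n, Aᵀ.mulVec (x₁ t) := by
      intro n
      induction n with
      | zero => simpa using hy20
      | succ k ih => rw [Finset.sum_range_succ, hrec2 k, ih]; abel
    have e10 : (∑ t ∈ Finset.range (T+1), A.mulVec (x₂ t)) 0 = y₁ (T+1) 0 := by
      rw [hY1 (T+1)]
    have e11 : (∑ t ∈ Finset.range (T+1), A.mulVec (x₂ t)) 1 = y₁ (T+1) 1 := by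
      rw [hY1 (T+1)]
    have e20 : (∑ t ∈ Finset.range (T+1), Aᵀ.mulVec (x₁ t)) 0 = -(y₂ (T+1) 0) := by
      rw [hY2 (T+1)]; simp
    have e21 : (∑ t ∈ Finset.range (T+1), Aᵀ.mulVec (x₁ t)) 1 = -(y₂ (T+1) 1) := by
      rw [hY2 (T+1)]; simp
    have h1 := sup_le_max (∑ t ∈ Finset.range (T+1), A.mulVec (x₂ t))
    have h2 := min_le_inf (∑ t ∈ Finset.range (T+1), Aᵀ.mulVec (x₁ t))
    rw [e10, e11] at h1
    rw [e20, e21, min_neg_neg] at h2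
    have hreg : totalRegret A x₁ x₂ T ≤ max (y₁ (T+1) 0) (y₁ (T+1) 1)
        + max (y₂ (T+1) 0) (y₂ (T+1) 1) := by
      unfold totalRegret
      have := sub_le_sub h1 h2
      linarith
    have m1 := max_le_combo (xs₁ 0) (xs₁ 1) (y₁ (T+1) 0) (y₁ (T+1) 1) hp1 hq1 hs1
    have m2 := max_le_combo (xs₂ 0) (xs₂ 1) (y₂ (T+1) 0) (y₂ (T+1) 1) hp2 hq2 hs2
    have hz := hzero (T+1)
    linarith
  rcases horient with ⟨ha, hb, hc, hd⟩ | ⟨ha, hb, hc, hd⟩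
  · refine ⟨8*(a-b+c-d)^2 / min c (-d) + 8*(a-b+c-d)^2 / min a (-b), main _ ?_⟩
    intro x₁ x₂ y₁ y₂ hrun n
    obtain ⟨hd10, hd20, hr1, hr2, hsprop, htprop, hs0eq, ht0eq⟩ :=
      run_reduction A x₁ x₂ y₁ y₂ hrun
    obtain ⟨-, -, hx10, hx20, -, -, -, -⟩ := hrun
    obtain ⟨⟨hu0, hu1⟩, hus⟩ := (mem_simplex_iff (x₂ 0)).mp hx20
    obtain ⟨⟨hw0, hw1⟩, hws⟩ := (mem_simplex_iff (x₁ 0)).mp hx10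
    rw [← ha_def, ← hb_def] at hs0eq
    rw [← hc_def, ← hd_def] at ht0eq
    simp only [← ha_def, ← hb_def, ← hc_def, ← hd_def] at hsprop htprop
    have hbu : b*(x₂ 0 0) + b*(x₂ 0 1) = b := by linear_combination b*hus
    have hau : a*(x₂ 0 0) + a*(x₂ 0 1) = a := by linear_combination a*hus
    have hdw : d*(x₁ 0 0) + d*(x₁ 0 1) = d := by linear_combination d*hws
    have hcw : c*(x₁ 0 0) + c*(x₁ 0 1) = c := by linear_combination c*hws
    have hs0c : b ≤ A.mulVec (x₂ 0) 0 - A.mulVec (x₂ 0) 1 := by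
      rw [hs0eq]; linarith [mul_nonneg (by linarith : (0:ℝ) ≤ a - b) hu0]
    have hs0c' : A.mulVec (x₂ 0) 0 - A.mulVec (x₂ 0) 1 ≤ a := by
      rw [hs0eq]; linarith [mul_nonneg (by linarith : (0:ℝ) ≤ a - b) hu1]
    have ht0c : d ≤ Aᵀ.mulVec (x₁ 0) 0 - Aᵀ.mulVec (x₁ 0) 1 := by
      rw [ht0eq]; linarith [mul_nonneg (by linarith : (0:ℝ) ≤ c - d) hw0]
    have ht0c' : Aᵀ.mulVec (x₁ 0) 0 - Aᵀ.mulVec (x₁ 0) 1 ≤ c := by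
      rw [ht0eq]; linarith [mul_nonneg (by linarith : (0:ℝ) ≤ c - d) hw1]
    have hcore := core a b c d ha hb hc hd
      (fun n => y₁ n 0 - y₁ n 1) (fun n => y₂ n 0 - y₂ n 1)
      (fun n => A.mulVec (x₂ n) 0 - A.mulVec (x₂ n) 1)
      (fun n => Aᵀ.mulVec (x₁ n) 0 - Aᵀ.mulVec (x₁ n) 1)
      hd10 hd20 ⟨hs0c, hs0c'⟩ ⟨ht0c, ht0c'⟩ hr1 hr2 hsprop htprop n
    obtain ⟨k1, k2⟩ := Hextract a b c d _ _ _ ha hb hc hd hcore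
    linarith
  · -- mirrored orientation: apply core with (-a, -b, d, c) and negated first coordinates
    refine ⟨8*(a-b+c-d)^2 / min d (-c) + 8*(a-b+c-d)^2 / min (-a) b, main _ ?_⟩
    intro x₁ x₂ y₁ y₂ hrun n
    obtain ⟨hd10, hd20, hr1, hr2, hsprop, htprop, hs0eq, ht0eq⟩ :=
      run_reduction A x₁ x₂ y₁ y₂ hrun
    obtain ⟨-, -, hx10, hx20, -, -, -, -⟩ := hrun
    obtain ⟨⟨hu0, hu1⟩, hus⟩ := (mem_simplex_iff (x₂ 0)).mp hx20
    obtain ⟨⟨hw0, hw1⟩, hws⟩ := (mem_simplex_iff (x₁ 0)).mp hx10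
    rw [← ha_def, ← hb_def] at hs0eq
    rw [← hc_def, ← hd_def] at ht0eq
    simp only [← ha_def, ← hb_def, ← hc_def, ← hd_def] at hsprop htprop
    have hd10' : -(y₁ 0 0 - y₁ 0 1) = 0 := by rw [hd10]; ring
    have hr1' : ∀ m, -(y₁ (m+1) 0 - y₁ (m+1) 1)
        = -(y₁ m 0 - y₁ m 1) + -(A.mulVec (x₂ m) 0 - A.mulVec (x₂ m) 1) := by
      intro m; have := hr1 m; linarith
    have hbu : b*(x₂ 0 0) + b*(x₂ 0 1) = b := by linear_combination b*hus
    have hau : a*(x₂ 0 0) + a*(x₂ 0 1) = a := by linear_combination a*hus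
    have hdw : d*(x₁ 0 0) + d*(x₁ 0 1) = d := by linear_combination d*hws
    have hcw : c*(x₁ 0 0) + c*(x₁ 0 1) = c := by linear_combination c*hws
    have hs0c : -b ≤ -(A.mulVec (x₂ 0) 0 - A.mulVec (x₂ 0) 1) := by
      rw [hs0eq]; linarith [mul_nonneg (by linarith : (0:ℝ) ≤ b - a) hu0]
    have hs0c' : -(A.mulVec (x₂ 0) 0 - A.mulVec (x₂ 0) 1) ≤ -a := by
      rw [hs0eq]; linarith [mul_nonneg (by linarith : (0:ℝ) ≤ b - a) hu1]
    have ht0c : c ≤ Aᵀ.mulVec (x₁ 0) 0 - Aᵀ.mulVec (x₁ 0) 1 := by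
      rw [ht0eq]; linarith [mul_nonneg (by linarith : (0:ℝ) ≤ d - c) hw1]
    have ht0c' : Aᵀ.mulVec (x₁ 0) 0 - Aᵀ.mulVec (x₁ 0) 1 ≤ d := by
      rw [ht0eq]; linarith [mul_nonneg (by linarith : (0:ℝ) ≤ d - c) hw0]
    have hs' : ∀ m, (-(A.mulVec (x₂ (m+1)) 0 - A.mulVec (x₂ (m+1)) 1) = -a ∨
        -(A.mulVec (x₂ (m+1)) 0 - A.mulVec (x₂ (m+1)) 1) = -b) ∧
        (0 < (y₂ m 0 - y₂ m 1) - 2*(Aᵀ.mulVec (x₁ m) 0 - Aᵀ.mulVec (x₁ m) 1) →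
          -(A.mulVec (x₂ (m+1)) 0 - A.mulVec (x₂ (m+1)) 1) = -a) ∧
        ((y₂ m 0 - y₂ m 1) - 2*(Aᵀ.mulVec (x₁ m) 0 - Aᵀ.mulVec (x₁ m) 1) < 0 →
          -(A.mulVec (x₂ (m+1)) 0 - A.mulVec (x₂ (m+1)) 1) = -b) := by
      intro m
      obtain ⟨hor, hpos, hneg⟩ := hsprop m
      exact ⟨hor.imp (fun h => by rw [h]) (fun h => by rw [h]),
        fun h => by rw [hpos h], fun h => by rw [hneg h]⟩
    have ht' : ∀ m, ((Aᵀ.mulVec (x₁ (m+1)) 0 - Aᵀ.mulVec (x₁ (m+1)) 1 = d) ∨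
        (Aᵀ.mulVec (x₁ (m+1)) 0 - Aᵀ.mulVec (x₁ (m+1)) 1 = c)) ∧
        (0 < -(y₁ m 0 - y₁ m 1) + 2*(-(A.mulVec (x₂ m) 0 - A.mulVec (x₂ m) 1)) →
          Aᵀ.mulVec (x₁ (m+1)) 0 - Aᵀ.mulVec (x₁ (m+1)) 1 = d) ∧
        (-(y₁ m 0 - y₁ m 1) + 2*(-(A.mulVec (x₂ m) 0 - A.mulVec (x₂ m) 1)) < 0 →
          Aᵀ.mulVec (x₁ (m+1)) 0 - Aᵀ.mulVec (x₁ (m+1)) 1 = c) := by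
      intro m
      obtain ⟨hor, hpos, hneg⟩ := htprop m
      refine ⟨hor.symm, fun h => ?_, fun h => ?_⟩
      · exact hneg (by linarith)
      · exact hpos (by linarith)
    have hcore := core (-a) (-b) d c (by linarith) (by linarith) hd (by linarith)
      (fun n => -(y₁ n 0 - y₁ n 1)) (fun n => y₂ n 0 - y₂ n 1)
      (fun n => -(A.mulVec (x₂ n) 0 - A.mulVec (x₂ n) 1))
      (fun n => Aᵀ.mulVec (x₁ n) 0 - Aᵀ.mulVec (x₁ n) 1)
      hd10' hd20 ⟨hs0c, hs0c'⟩ ⟨ht0c, ht0c'⟩ hr1' hr2 hs' ht' n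
    obtain ⟨k1, k2⟩ :=
      Hextract (-a) (-b) d c _ _ _ (by linarith) (by linarith) hd (by linarith) hcore
    rw [abs_neg] at k1
    have heq : 8*(-a - -b + d - c)^2 = 8*(a-b+c-d)^2 := by ring
    rw [heq] at k1 k2
    have hmineq : min (-a) (- -b) = min (-a) b := by norm_num
    rw [hmineq] at k2
    linarith
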